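/- Perturbation lemma: Let f₀ be a continuous probability density on ℝ symmetric about 0, let G be a one-dimensional cumulative distribution function whose derivative G' exists and is a density symmetric about 0, and let h : ℝ → ℝ be an odd function. Then f(x) = 2·f₀(x)·G(h(x)) is a probability density on ℝ. -/

import Mathlib

open MeasureTheory Real Filter Set

noncomputable def phi (x : ℝ) : ℝ := (Real.sqrt (2 * Real.pi))⁻¹ * Real.exp (-x ^ 2 / 2)

noncomputable def Phi (x : ℝ) : ℝ := ∫ t in Set.Iic x, phi t

theorem perturbation_lemma (f₀ G g h : ℝ → ℝ)
    (hf₀_cont : Continuous f₀) (hf₀_nonneg : ∀ x, 0 ≤ f₀ x)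
    (hf₀_int : (∫ x : ℝ, f₀ x) = 1)
    (hf₀_symm : ∀ x, f₀ (-x) = f₀ x)
    (hG_deriv : ∀ x, HasDerivAt G (g x) x)
    (hg_nonneg : ∀ x, 0 ≤ g x)
    (hg_int : (∫ x : ℝ, g x) = 1)
    (hg_symm : ∀ x, g (-x) = g x)
    (hG_bot : Tendsto G atBot (nhds 0))
    (hG_top : Tendsto G atTop (nhds 1))
    (hh_odd : ∀ x, h (-x) = -h x)
    (hh_meas : Measurable h) :
    (∀ x : ℝ, 0 ≤ 2 * f₀ x * G (h x)) ∧
    (∫ x : ℝ, 2 * f₀ x * G (h x)) = 1 := by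
  have hGdiff : Differentiable ℝ G := fun x => (hG_deriv x).differentiableAt
  have hGcont : Continuous G := hGdiff.continuous
  -- G is monotone
  have hGmono : Monotone G := by
    apply monotone_of_deriv_nonneg hGdiff
    intro x
    rw [(hG_deriv x).deriv]
    exact hg_nonneg x
  -- G ≥ 0
  have hG0 : ∀ x, 0 ≤ G x := by
    intro x
    refine le_of_tendsto hG_bot ?_
    filter_upwards [eventually_le_atBot x] with y hy using hGmono hy
  -- G x + G (-x) = 1
  have hGsum : ∀ x, G x + G (-x) = 1 := by
    have hFderiv : ∀ x : ℝ, HasDerivAt (fun x => G x + G (-x)) 0 x := by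
      intro x
      have h1 : HasDerivAt (fun x : ℝ => G (-x)) (g (-x) * (-1)) x :=
        (hG_deriv (-x)).comp x (hasDerivAt_neg x)
      have : HasDerivAt (fun x => G x + G (-x)) (g x + g (-x) * (-1)) x := (hG_deriv x).add h1
      simpa [hg_symm] using this
    have hconst : ∀ x y : ℝ, G x + G (-x) = G y + G (-y) := by
      intro x y
      exact is_const_of_deriv_eq_zero (fun z => (hFderiv z).differentiableAt)
        (fun z => (hFderiv z).deriv) x y
    have htend : Tendsto (fun x => G x + G (-x)) atTop (nhds 1) := by
      have h2 : Tendsto (fun x : ℝ => G (-x)) atTop (nhds 0) :=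
        hG_bot.comp tendsto_neg_atTop_atBot
      simpa using hG_top.add h2
    intro x
    have : Tendsto (fun _ : ℝ => G x + G (-x)) atTop (nhds (G x + G (-x))) :=
      tendsto_const_nhds
    have heq : (fun y : ℝ => G y + G (-y)) = fun _ => G x + G (-x) := by
      funext y; exact (hconst y x)
    rw [heq] at htend
    exact tendsto_nhds_unique this htend
  -- G ≤ 1
  have hG1 : ∀ x, G x ≤ 1 := by
    intro x
    have := hGsum x
    nlinarith [hG0 (-x)]
  have hnonneg : ∀ x : ℝ, 0 ≤ 2 * f₀ x * G (h x) := by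
    intro x
    have := hf₀_nonneg x
    have := hG0 (h x)
    positivity
  refine ⟨hnonneg, ?_⟩
  -- f₀ is integrable
  have hf₀_integrable : Integrable f₀ := by
    by_contra hc
    rw [integral_undef hc] at hf₀_int
    norm_num at hf₀_int
  set f : ℝ → ℝ := fun x => 2 * f₀ x * G (h x) with hf
  have hf_meas : AEStronglyMeasurable f volume := by
    apply Measurable.aestronglyMeasurable
    exact ((measurable_const.mul hf₀_cont.measurable).mul
      (hGcont.measurable.comp hh_meas))
  have hf_integrable : Integrable f := by
    refine Integrable.mono' (hf₀_integrable.const_mul 2) hf_meas ?_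
    filter_upwards with x
    have h1 := hnonneg x
    have h2 := hG1 (h x)
    have h3 := hf₀_nonneg x
    rw [Real.norm_eq_abs, abs_of_nonneg h1]
    nlinarith
  have hkey : ∀ x : ℝ, f x + f (-x) = 2 * f₀ x := by
    intro x
    have : G (h x) + G (-(h x)) = 1 := hGsum (h x)
    simp only [hf, hf₀_symm, hh_odd]
    linear_combination 2 * f₀ x * this
  have hneg : (∫ x : ℝ, f (-x)) = ∫ x : ℝ, f x := integral_neg_eq_self f volume
  have e1 : (∫ x : ℝ, (f x + f (-x))) = ∫ x : ℝ, 2 * f₀ x := by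
    congr 1; funext x; exact hkey x
  have e2 : (∫ x : ℝ, (f x + f (-x))) = (∫ x : ℝ, f x) + (∫ x : ℝ, f (-x)) :=
    integral_add hf_integrable hf_integrable.comp_neg
  rw [e1, integral_const_mul, hf₀_int, hneg] at e2
  show (∫ x : ℝ, f x) = 1
  linarith
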